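/- Let s ≥ 0 be an integer, let x₁,…,x_p ∈ ℝ², let η ∈ ℝ^p, and let φ(x,y) = x^a y^b be a monomial of total degree j = a + b with 1 ≤ j ≤ s+2. If Δφ(0,0) − r^{−2} Σ_{k=1}^{p} η_k ( φ(r x_k) − φ(0,0) ) = o(r^{s}) as r → 0⁺, then Σ_{k=1}^{p} η_k φ(x_k) = Δφ(0,0) (equal to 2 if φ is x² or y², and to 0 otherwise). -/
import Mathlib


open Finset Asymptotics Topology

lemma aux_zero (c : ℝ) (m : ℤ) (s : ℕ) (hm : m ≤ (s : ℤ))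
    (h : (fun r : ℝ => c * r ^ m) =o[𝓝[>] (0 : ℝ)] fun r => r ^ s) : c = 0 := by
  by_contra hc
  have hcpos : 0 < |c| := abs_pos.mpr hc
  have hev := h.def (half_pos hcpos)
  have hev2 : ∀ᶠ r : ℝ in 𝓝[>] 0, r < 1 := by
    filter_upwards [eventually_nhdsWithin_of_eventually_nhds
      (eventually_lt_nhds (show (0:ℝ) < 1 by norm_num))] with r hr using hr
  have hev3 : ∀ᶠ r : ℝ in 𝓝[>] 0, 0 < r := eventually_mem_nhdsWithin
  obtain ⟨r, hr1, hr2, hr3⟩ := (hev.and (hev2.and hev3)).exists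
  have hrm : (0 : ℝ) < r ^ m := zpow_pos hr3 m
  have hle : r ^ (s : ℤ) ≤ r ^ m := zpow_le_zpow_right_of_le_one₀ hr3 hr2.le hm
  have key : |c| * r ^ m ≤ |c| / 2 * r ^ m := by
    calc |c| * r ^ m = ‖c * r ^ m‖ := by
          rw [norm_mul, Real.norm_eq_abs, Real.norm_eq_abs, abs_of_pos hrm]
      _ ≤ |c| / 2 * ‖r ^ s‖ := hr1
      _ = |c| / 2 * r ^ (s : ℤ) := by
          rw [Real.norm_eq_abs, abs_of_pos (pow_pos hr3 s), zpow_natCast]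
      _ ≤ |c| / 2 * r ^ m := mul_le_mul_of_nonneg_left hle (by positivity)
  have : |c| ≤ |c| / 2 := le_of_mul_le_mul_right key hrm
  linarith

/-- Converse direction for a single monomial: if the finite-difference approximation with
weights `η` of the Laplacian at the origin applied to the monomial `φ(x,y) = x^a y^b`
(of total degree `1 ≤ a + b ≤ s + 2`) has error `o(rˢ)` as `r → 0⁺`, then the weights
reproduce `Δφ(0,0)` exactly: `∑ₖ ηₖ φ(xₖ) = Δφ(0,0)` (which is `2` if `φ` is `x²` or `y²`,
and `0` otherwise). -/
theorem stmt5 (s : ℕ) {p : ℕ} (x : Fin p → ℝ × ℝ) (η : Fin p → ℝ)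
    (a b : ℕ) (h1 : 1 ≤ a + b) (h2 : a + b ≤ s + 2)
    (h : (fun r : ℝ =>
        (if (a = 2 ∧ b = 0) ∨ (a = 0 ∧ b = 2) then (2 : ℝ) else 0) -
          r ^ (-2 : ℤ) *
            ∑ k, η k * ((r * (x k).1) ^ a * (r * (x k).2) ^ b - (0 : ℝ) ^ a * (0 : ℝ) ^ b))
        =o[𝓝[>] (0 : ℝ)] fun r => r ^ s) :
    ∑ k, η k * ((x k).1 ^ a * (x k).2 ^ b) =
      (if (a = 2 ∧ b = 0) ∨ (a = 0 ∧ b = 2) then (2 : ℝ) else 0) := by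
  set C : ℝ := if (a = 2 ∧ b = 0) ∨ (a = 0 ∧ b = 2) then (2 : ℝ) else 0 with hC
  set S : ℝ := ∑ k, η k * ((x k).1 ^ a * (x k).2 ^ b) with hS
  have hzero : (0 : ℝ) ^ a * (0 : ℝ) ^ b = 0 := by
    rcases Nat.eq_zero_or_pos a with ha | ha
    · have hb : 0 < b := by omega
      simp [zero_pow hb.ne']
    · simp [zero_pow ha.ne']
  have h' : (fun r : ℝ => C - r ^ ((a + b : ℕ) - 2 : ℤ) * S) =o[𝓝[>] (0 : ℝ)]
      fun r => r ^ s := by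
    refine h.congr' ?_ Filter.EventuallyEq.rfl
    filter_upwards [eventually_mem_nhdsWithin] with r (hr : 0 < r)
    have hrne : r ≠ 0 := hr.ne'
    congr 1
    rw [hzero]
    have hsum : ∑ k, η k * ((r * (x k).1) ^ a * (r * (x k).2) ^ b - 0)
        = r ^ (a + b) * S := by
      rw [hS, Finset.mul_sum]
      refine Finset.sum_congr rfl fun k _ => by
        rw [mul_pow, mul_pow, pow_add]; ring
    rw [hsum, hS, ← zpow_natCast r (a + b), ← mul_assoc, ← zpow_add₀ hrne]
    congr 2
  by_cases hj : a + b = 2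
  · have hm : ((a + b : ℕ) - 2 : ℤ) = 0 := by omega
    have h'' : (fun r : ℝ => (C - S) * r ^ (0 : ℤ)) =o[𝓝[>] (0 : ℝ)] fun r => r ^ s := by
      refine h'.congr' ?_ Filter.EventuallyEq.rfl
      filter_upwards with r
      rw [hm]; simp
    have := aux_zero (C - S) 0 s (by positivity) h''
    linarith
  · have hCz : C = 0 := by
      rw [hC, if_neg]
      rintro (⟨ha, hb⟩ | ⟨ha, hb⟩) <;> omega
    have h'' : (fun r : ℝ => (-S) * r ^ ((a + b : ℕ) - 2 : ℤ)) =o[𝓝[>] (0 : ℝ)]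
        fun r => r ^ s := by
      refine h'.congr' ?_ Filter.EventuallyEq.rfl
      filter_upwards with r
      rw [hCz]; ring
    have := aux_zero (-S) _ s (by omega) h''
    rw [hCz]; linarith
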